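/- Let f be a free polynomial of degree n with characteristic exponents m₁ < ... < m_h, GCD-sequence D₁ = n^e, D_{i+1} = gcd of (e,e)-minors of (nI_e, m₁^T,...,mᵢ^T), e_i = D_i/D_{i+1}, and r-sequence r₁ = m₁, r_i = e_{i-1}r_{i-1} + m_i - m_{i-1}. Then for each i ∈ {1,...,h}: e_i·r_i ∈ (nℤ)^e + Σ_{j<i} r_jℤ, and α·r_i ∉ (nℤ)^e + Σ_{j<i} r_jℤ for all integers 1 ≤ α < e_i. -/

import Mathlib

/-- The subgroup `(nℤ)^e + m₁ℤ + ⋯ + m_iℤ` of `ℤ^e`. -/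
def latticeSpan (e n : ℕ) {i : ℕ} (m : Fin i → Fin e → ℤ) : Set (Fin e → ℤ) :=
  {v | ∃ (a : Fin e → ℤ) (c : Fin i → ℤ), v = (n : ℤ) • a + ∑ j, c j • m j}

/-- The gcd of the `(e,e)` minors of the `e × (e+i)` matrix
`(nI_e, m₁ᵀ, ..., m_iᵀ)`.  With the characteristic exponents `m₁,...,m_i` this
is `D_{i+1}`; for `i = 0` it equals `D₁ = n^e`. -/
def minorGcd (e n : ℕ) {i : ℕ} (m : Fin i → Fin e → ℤ) : ℤ :=
  Finset.univ.gcd fun c : Fin e → (Fin e ⊕ Fin i) =>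
    (Matrix.of fun r s =>
      Sum.elim (fun l => if r = l then (n : ℤ) else 0) (fun l => m l r) (c s)).det

/-- `e_i = D_i / D_{i+1}` (`i` is 0-indexed here: `Eseq` at `i` uses the first
`i` resp. `i+1` of the exponents `m`). -/
def Eseq (e n h : ℕ) (m : Fin h → Fin e → ℤ) (i : Fin h) : ℤ :=
  minorGcd e n (fun j : Fin i.val => m ⟨j.val, j.2.trans i.2⟩) /
    minorGcd e n (fun j : Fin (i.val + 1) => m ⟨j.val, Nat.lt_of_lt_of_le j.2 i.2⟩)

open Matrix Submodule Set

section Aux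
variable (e n : ℕ)

private def nbasis : Fin e → Fin e → ℤ := fun l r => if r = l then (n : ℤ) else 0

private def colMat (w : Fin e → Fin e → ℤ) : Matrix (Fin e) (Fin e) ℤ :=
  Matrix.of fun r s => w s r

private lemma det_colMat (w : Fin e → Fin e → ℤ) :
    (colMat e w).det = Matrix.detRowAlternating w := by
  rw [show colMat e w = (Matrix.of w)ᵀ from rfl, Matrix.det_transpose]; rfl

private def DI {κ : Type} (gen : κ → Fin e → ℤ) : Ideal ℤ :=
  Ideal.span (Set.range fun c : Fin e → κ => (colMat e (gen ∘ c)).det)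

private lemma det_mem_DI {κ : Type} [Fintype κ] (gen : κ → Fin e → ℤ)
    (w : Fin e → Fin e → ℤ) (hw : ∀ s, w s ∈ span ℤ (Set.range gen)) :
    (colMat e w).det ∈ DI e gen := by
  choose co hco using fun s => (mem_span_range_iff_exists_fun ℤ).mp (hw s)
  have hw' : w = fun s => ∑ j, co s j • gen j := funext fun s => (hco s).symm
  rw [det_colMat, hw']
  rw [show (Matrix.detRowAlternating (fun s => ∑ j, co s j • gen j) : ℤ)
      = (Matrix.detRowAlternating (R := ℤ) (n := Fin e)).toMultilinearMap
          (fun s => ∑ j, co s j • gen j) from rfl,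
    (Matrix.detRowAlternating (R := ℤ) (n := Fin e)).toMultilinearMap.map_sum
      (g := fun s j => co s j • gen j)]
  refine Ideal.sum_mem _ fun r _ => ?_
  have h2 := (Matrix.detRowAlternating (R := ℤ) (n := Fin e)).toMultilinearMap.map_smul_univ
      (fun s => co s (r s)) (fun s => gen (r s))
  rw [show (fun s => co s (r s) • gen (r s)) = fun s => (fun t => co t (r t)) s • (fun t => gen (r t)) s from rfl,
    h2, smul_eq_mul]
  exact Ideal.mul_mem_left _ _ (Ideal.subset_span ⟨r, det_colMat e _⟩)

private lemma DI_mono {κ κ' : Type} [Fintype κ'] (gen : κ → Fin e → ℤ) (gen' : κ' → Fin e → ℤ)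
    (hle : span ℤ (Set.range gen) ≤ span ℤ (Set.range gen')) : DI e gen ≤ DI e gen' := by
  refine Ideal.span_le.mpr ?_
  rintro x ⟨c, rfl⟩
  exact det_mem_DI e gen' _ fun s => hle (subset_span ⟨c s, rfl⟩)


private lemma key {κ : Type} [Fintype κ] (gen : κ → Fin e → ℤ) (v : Fin e → ℤ)
    (g g' : ℤ) (hg : Ideal.span {g} = DI e gen)
    (hg' : Ideal.span {g'} = DI e (Sum.elim gen (fun _ : Unit => v)))
    (hg'0 : g' ≠ 0) (α : ℤ) :
    α • v ∈ span ℤ (Set.range gen) ↔ g / g' ∣ α := by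
  set gen' : κ ⊕ Unit → Fin e → ℤ := Sum.elim gen (fun _ : Unit => v) with hgen'
  have hrle : Set.range gen ⊆ Set.range gen' := by
    rintro x ⟨k, rfl⟩; exact ⟨Sum.inl k, rfl⟩
  have hle : DI e gen ≤ DI e gen' := DI_mono e _ _ (span_mono hrle)
  have hdvd : g' ∣ g := by
    rw [← Ideal.mem_span_singleton, hg']
    exact hle (by rw [← hg]; exact Ideal.mem_span_singleton_self g)
  obtain ⟨E, hE⟩ := hdvd
  have hdivE : g / g' = E := by rw [hE, Int.mul_ediv_cancel_left _ hg'0]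
  rw [hdivE]
  constructor
  · intro hαv
    have hdet : ∀ c : Fin e → (κ ⊕ Unit), g ∣ α * (colMat e (gen' ∘ c)).det := by
      intro c
      by_cases h2 : ∃ s t : Fin e, s ≠ t ∧ c s = Sum.inr () ∧ c t = Sum.inr ()
      · obtain ⟨s, t, hst, hs, ht⟩ := h2
        have hz : (colMat e (gen' ∘ c)).det = 0 := by
          rw [det_colMat]
          exact Matrix.detRowAlternating.map_eq_zero_of_eq _
            (by simp [Function.comp, hs, ht, hgen']) hst
        rw [hz, mul_zero]
        exact dvd_zero g
      · set w : Fin e → Fin e → ℤ := fun s => Sum.elim gen (fun _ : Unit => α • v) (c s) with hw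
        have hwmem : ∀ s, w s ∈ span ℤ (Set.range gen) := by
          intro s
          show Sum.elim gen (fun _ : Unit => α • v) (c s) ∈ span ℤ (Set.range gen)
          rcases hcs : c s with k | u
          · exact subset_span ⟨k, rfl⟩
          · exact hαv
        have hdw : g ∣ (colMat e w).det := by
          rw [← Ideal.mem_span_singleton, hg]
          exact det_mem_DI e gen w hwmem
        by_cases h1 : ∃ s, c s = Sum.inr ()
        · obtain ⟨s₀, hs₀⟩ := h1
          have huniq : ∀ s, s ≠ s₀ → c s ≠ Sum.inr () := by
            intro s hss hcs
            exact h2 ⟨s, s₀, hss, hcs, hs₀⟩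
          have hwu : w = Function.update (gen' ∘ c) s₀ (α • v) := by
            funext s
            by_cases hss : s = s₀
            · subst hss
              rw [Function.update_self]
              show Sum.elim gen (fun _ : Unit => α • v) (c s) = α • v
              rw [hs₀]
              rfl
            · rw [Function.update_of_ne hss]
              show Sum.elim gen (fun _ : Unit => α • v) (c s) = gen' (c s)
              rcases hcs : c s with k | u
              · rfl
              · exact absurd hcs (huniq s hss)
          have hrel : (colMat e w).det = α * (colMat e (gen' ∘ c)).det := by
            rw [det_colMat, det_colMat, hwu]
            have hms := (Matrix.detRowAlternating (R := ℤ) (n := Fin e)).toMultilinearMap.map_update_smul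
              (gen' ∘ c) s₀ α v
            rw [show (Matrix.detRowAlternating (Function.update (gen' ∘ c) s₀ (α • v)) : ℤ)
              = (Matrix.detRowAlternating (R := ℤ) (n := Fin e)).toMultilinearMap
                  (Function.update (gen' ∘ c) s₀ (α • v)) from rfl, hms]
            have hcv : (gen' ∘ c) s₀ = v := by
              show gen' (c s₀) = v
              rw [hs₀]; rfl
            rw [← hcv, Function.update_eq_self, smul_eq_mul]; rfl
          rw [← hrel]; exact hdw
        · have hwc : w = gen' ∘ c := by
            funext s
            show Sum.elim gen (fun _ : Unit => α • v) (c s) = gen' (c s)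
            rcases hcs : c s with k | u
            · rfl
            · exact (h1 ⟨s, by rw [hcs]⟩).elim
          rw [hwc] at hdw
          exact Dvd.dvd.mul_left hdw α
    have hIle : DI e gen' ≤ Submodule.comap (LinearMap.lsmul ℤ ℤ α) (Ideal.span {g}) := by
      refine Submodule.span_le.mpr ?_
      rintro x ⟨c, rfl⟩
      simp only [SetLike.mem_coe, Submodule.mem_comap, LinearMap.lsmul_apply, smul_eq_mul]
      exact Ideal.mem_span_singleton.mpr (hdet c)
    have hgα : g ∣ α * g' := by
      have := hIle (by rw [← hg']; exact Ideal.mem_span_singleton_self g')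
      simpa only [Submodule.mem_comap, LinearMap.lsmul_apply, smul_eq_mul,
        Ideal.mem_span_singleton] using this
    obtain ⟨k, hk⟩ := hgα
    refine ⟨k, ?_⟩
    have hcan : g' * α = g' * (E * k) := by
      rw [hE] at hk; linarith [hk]
    exact mul_left_cancel₀ hg'0 hcan
  · intro hEα
    suffices hEv : E • v ∈ span ℤ (Set.range gen) by
      obtain ⟨k, rfl⟩ := hEα
      rw [mul_comm, mul_smul]
      exact Submodule.smul_mem _ k hEv
    set T : Submodule ℤ ℤ :=
      Submodule.comap (LinearMap.toSpanSingleton ℤ (Fin e → ℤ) v) (span ℤ (Set.range gen)) with hT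
    have hcram : ∀ c : Fin e → κ,
        (colMat e (gen ∘ c)).det ∈ Submodule.map (LinearMap.toSpanSingleton ℤ ℤ g') T := by
      intro c
      set W := colMat e (gen ∘ c) with hW
      have hWd : g' ∣ W.det := by
        rw [← Ideal.mem_span_singleton, hg']
        exact hle (Ideal.subset_span ⟨c, rfl⟩)
      have hcrd : ∀ j, g' ∣ Matrix.cramer W v j := by
        intro j
        have hup : W.updateCol j v
            = colMat e (gen' ∘ (fun s => if s = j then Sum.inr () else Sum.inl (c s))) := by
          ext r s
          by_cases hsj : s = j
          · subst hsj
            simp [Matrix.updateCol_apply, colMat, hgen']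
          · simp [Matrix.updateCol_apply, hsj, colMat, hgen', hW]
        rw [Matrix.cramer_apply, hup, ← Ideal.mem_span_singleton, hg']
        exact Ideal.subset_span ⟨_, rfl⟩
      choose q hq using hcrd
      obtain ⟨t, ht⟩ := hWd
      have hmv := Matrix.mulVec_cramer W v
      have hsum : W.det • v = ∑ j, (g' * q j) • gen (c j) := by
        rw [← hmv]
        funext rr
        simp only [Matrix.mulVec, dotProduct, Finset.sum_apply, Pi.smul_apply,
          smul_eq_mul]
        refine Finset.sum_congr rfl fun j _ => ?_
        rw [← hq j]
        exact mul_comm _ _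
      have hcan : t • v = ∑ j, q j • gen (c j) := by
        apply smul_right_injective (Fin e → ℤ) hg'0
        calc g' • t • v = (g' * t) • v := (mul_smul g' t v).symm
          _ = W.det • v := by rw [← ht]
          _ = ∑ j, (g' * q j) • gen (c j) := hsum
          _ = g' • ∑ j, q j • gen (c j) := by
              rw [Finset.smul_sum]
              exact Finset.sum_congr rfl fun j _ => (mul_smul g' (q j) _)
      refine Submodule.mem_map.mpr ⟨t, ?_, ?_⟩
      · rw [hT]
        simp only [Submodule.mem_comap, LinearMap.toSpanSingleton_apply]
        rw [hcan]
        exact Submodule.sum_mem _ fun j _ => Submodule.smul_mem _ _ (subset_span ⟨c j, rfl⟩)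
      · rw [LinearMap.toSpanSingleton_apply, smul_eq_mul, ht, mul_comm]
    have hDIle : DI e gen ≤ Submodule.map (LinearMap.toSpanSingleton ℤ ℤ g') T := by
      refine Submodule.span_le.mpr ?_
      rintro x ⟨c, rfl⟩
      exact hcram c
    obtain ⟨t₀, ht₀T, ht₀⟩ := hDIle (by rw [← hg]; exact Ideal.mem_span_singleton_self g)
    rw [LinearMap.toSpanSingleton_apply, smul_eq_mul] at ht₀
    have hEt : E = t₀ := by
      apply mul_left_cancel₀ hg'0
      rw [← hE, ← ht₀, mul_comm]
    rw [hEt]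
    simpa only [hT, SetLike.mem_coe, Submodule.mem_comap, LinearMap.toSpanSingleton_apply] using ht₀T

private lemma span_finset_gcd {ι : Type} [DecidableEq ι] (s : Finset ι) (F : ι → ℤ) :
    Ideal.span (F '' ↑s) = Ideal.span {s.gcd F} := by
  induction s using Finset.induction_on with
  | empty =>
      rw [Finset.coe_empty, Set.image_empty, Ideal.span_empty, Finset.gcd_empty]
      exact (Ideal.span_singleton_eq_bot.mpr rfl).symm
  | insert _ _ ha ih =>
      rw [Finset.gcd_insert, Finset.coe_insert, Set.image_insert_eq, Ideal.span_insert, ih,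
        ← Ideal.span_insert, span_gcd]

private lemma span_minorGcd {i : ℕ} (m : Fin i → Fin e → ℤ) :
    Ideal.span {minorGcd e n m} = DI e (Sum.elim (nbasis e n) m) := by
  have h1 : ∀ c : Fin e → (Fin e ⊕ Fin i),
      (Matrix.of fun r s =>
        Sum.elim (fun l => if r = l then (n : ℤ) else 0) (fun l => m l r) (c s))
        = colMat e ((Sum.elim (nbasis e n) m) ∘ c) := by
    intro c; ext r s
    show Sum.elim (fun l => if r = l then (n : ℤ) else 0) (fun l => m l r) (c s)
      = Sum.elim (nbasis e n) m (c s) r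
    rcases c s with k | k
    · rfl
    · rfl
  rw [minorGcd, ← span_finset_gcd, DI]
  congr 1
  rw [Finset.coe_univ, Set.image_univ]
  exact congrArg _ (funext fun c => congrArg Matrix.det (h1 c))

private lemma minorGcd_pos (hn : 0 < n) {i : ℕ} (m : Fin i → Fin e → ℤ) :
    0 < minorGcd e n m := by
  have hinl : (Matrix.of fun r s =>
      Sum.elim (fun l => if r = l then (n : ℤ) else 0) (fun l => m l r)
        ((Sum.inl : Fin e → Fin e ⊕ Fin i) s)) = Matrix.diagonal (fun _ => (n : ℤ)) := by
    ext r s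
    show (if r = s then (n : ℤ) else 0) = _
    rw [Matrix.diagonal_apply]
  have hne : minorGcd e n m ≠ 0 := by
    intro h0
    have h1 := Finset.gcd_eq_zero_iff.mp h0 Sum.inl (Finset.mem_univ _)
    rw [hinl, Matrix.det_diagonal] at h1
    have h2 : ((n : ℤ)) ^ e = 0 := by simpa [Finset.prod_const] using h1
    exact pow_ne_zero e (by exact_mod_cast hn.ne') h2
  have hnn : 0 ≤ minorGcd e n m := by
    have h3 := Finset.normalize_gcd (s := (Finset.univ : Finset (Fin e → Fin e ⊕ Fin i)))
      (f := fun c => (Matrix.of fun r s =>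
        Sum.elim (fun l => if r = l then (n : ℤ) else 0) (fun l => m l r) (c s)).det)
    rw [← Int.abs_eq_normalize] at h3
    rw [minorGcd, ← h3]
    exact abs_nonneg _
  omega

private lemma range_fin_snoc {β : Type*} {i : ℕ} (f : Fin (i + 1) → β) :
    Set.range f = Set.range (fun j : Fin i => f j.castSucc) ∪ {f (Fin.last i)} := by
  ext x
  constructor
  · rintro ⟨j, rfl⟩
    induction j using Fin.lastCases with
    | last => exact Or.inr rfl
    | cast j => exact Or.inl ⟨j, rfl⟩
  · rintro (⟨j, rfl⟩ | hx)
    · exact ⟨j.castSucc, rfl⟩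
    · exact ⟨Fin.last i, hx.symm⟩

private lemma span_union_singleton_congr {W : Type*} [AddCommGroup W] [Module ℤ W]
    (S : Set W) (u w : W) (h : u - w ∈ span ℤ S) :
    span ℤ (S ∪ {u}) = span ℤ (S ∪ {w}) := by
  have hkey : ∀ u w : W, u - w ∈ span ℤ S → span ℤ (S ∪ {u}) ≤ span ℤ (S ∪ {w}) := by
    intro u w h
    rw [span_union, span_union]
    refine sup_le le_sup_left ?_
    rw [span_singleton_le_iff_mem]
    have hu : u = (u - w) + w := by abel
    rw [hu]
    exact add_mem (Submodule.mem_sup_left h) (Submodule.mem_sup_right (subset_span rfl))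
  refine le_antisymm (hkey u w h) (hkey w u ?_)
  have : w - u = -(u - w) := by abel
  rw [this]
  exact neg_mem h

private lemma sum_nbasis (a : Fin e → ℤ) :
    ∑ l, a l • nbasis e n l = (n : ℤ) • a := by
  funext r
  rw [Finset.sum_apply]
  have h1 : ∀ l, (a l • nbasis e n l) r = if r = l then a l * n else 0 := by
    intro l
    show a l * (if r = l then (n : ℤ) else 0) = _
    by_cases hrl : r = l
    · simp [hrl]
    · simp [hrl]
  rw [Finset.sum_congr rfl fun l _ => h1 l, Finset.sum_ite_eq (Finset.univ) r (fun l => a l * n)]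
  simp [mul_comm]

private lemma lattice_eq {i : ℕ} (ms : Fin i → Fin e → ℤ) :
    latticeSpan e n ms = ↑(span ℤ (Set.range (Sum.elim (nbasis e n) ms))) := by
  ext v
  simp only [latticeSpan, Set.mem_setOf_eq, SetLike.mem_coe, mem_span_range_iff_exists_fun]
  constructor
  · rintro ⟨a, c, rfl⟩
    refine ⟨Sum.elim a c, ?_⟩
    rw [Fintype.sum_sum_type]
    congr 1
    exact sum_nbasis e n a
  · rintro ⟨co, rfl⟩
    refine ⟨co ∘ Sum.inl, co ∘ Sum.inr, ?_⟩
    rw [Fintype.sum_sum_type]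
    congr 1
    exact sum_nbasis e n (co ∘ Sum.inl)

private lemma char_lemma (hn : 0 < n) {i : ℕ} (mm : Fin (i + 1) → Fin e → ℤ)
    (v : Fin e → ℤ)
    (hvm : v - mm (Fin.last i) ∈
      span ℤ (Set.range (Sum.elim (nbasis e n) (fun j : Fin i => mm j.castSucc)))) (α : ℤ) :
    α • v ∈ span ℤ (Set.range (Sum.elim (nbasis e n) (fun j : Fin i => mm j.castSucc)))
      ↔ (minorGcd e n (fun j : Fin i => mm j.castSucc) / minorGcd e n mm) ∣ α := by
  set gen : (Fin e ⊕ Fin i) → Fin e → ℤ :=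
    Sum.elim (nbasis e n) (fun j : Fin i => mm j.castSucc) with hgen
  have e1 : Set.range (Sum.elim (nbasis e n) mm) = Set.range gen ∪ {mm (Fin.last i)} := by
    rw [hgen, Sum.elim_range, Sum.elim_range, range_fin_snoc mm, Set.union_assoc]
  have e2 : Set.range (Sum.elim gen (fun _ : Unit => v)) = Set.range gen ∪ {v} := by
    rw [Sum.elim_range, Set.range_const]
  have hspan : span ℤ (Set.range (Sum.elim (nbasis e n) mm))
      = span ℤ (Set.range (Sum.elim gen (fun _ : Unit => v))) := by
    rw [e1, e2]
    refine span_union_singleton_congr _ _ _ ?_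
    have : mm (Fin.last i) - v = -(v - mm (Fin.last i)) := by abel
    rw [this]
    exact neg_mem hvm
  have hDI : DI e (Sum.elim (nbasis e n) mm) = DI e (Sum.elim gen (fun _ : Unit => v)) :=
    le_antisymm (DI_mono e _ _ (le_of_eq hspan)) (DI_mono e _ _ (le_of_eq hspan.symm))
  exact key e gen v _ _ (span_minorGcd e n _)
    ((span_minorGcd e n mm).trans hDI) (minorGcd_pos e n hn mm).ne' α

private lemma step_lemma {h : ℕ} (f : Fin h → Fin e → ℤ) (k : ℕ) (hk : k + 1 ≤ h) :
    span ℤ (Set.range (Sum.elim (nbasis e n)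
        (fun j : Fin (k + 1) => f ⟨j.1, Nat.lt_of_lt_of_le j.2 hk⟩)))
      = span ℤ (Set.range (Sum.elim (nbasis e n)
          (fun j : Fin k => f ⟨j.1, Nat.lt_of_lt_of_le (Nat.lt_succ_of_lt j.2) hk⟩)))
        ⊔ span ℤ {f ⟨k, hk⟩} := by
  rw [Sum.elim_range, Sum.elim_range,
    range_fin_snoc (fun j : Fin (k + 1) => f ⟨j.1, Nat.lt_of_lt_of_le j.2 hk⟩),
    ← Set.union_assoc, span_union]
  rfl

end Aux

/-- for the characteristic exponents `m₁ < ⋯ < m_h` of a free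
polynomial of degree `n`, with GCD-sequence `D`, `e`-sequence `e_i = D_i/D_{i+1}`
and `r`-sequence `r₁ = m₁`, `r_i = e_{i-1}r_{i-1} + m_i - m_{i-1}`, one has
`e_i·r_i ∈ (nℤ)^e + ∑_{j<i} r_jℤ` and `α·r_i ∉ (nℤ)^e + ∑_{j<i} r_jℤ` for all
`1 ≤ α < e_i`. -/


theorem stmt_11 (e n h : ℕ) (hn : 0 < n)
    (m r : Fin h → Fin e → ℤ)
    (hr0 : ∀ hh : 0 < h, r ⟨0, hh⟩ = m ⟨0, hh⟩)
    (hrrec : ∀ (i : ℕ) (hi : i + 1 < h),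
      r ⟨i + 1, hi⟩ = Eseq e n h m ⟨i, Nat.lt_of_succ_lt hi⟩ • r ⟨i, Nat.lt_of_succ_lt hi⟩
        + m ⟨i + 1, hi⟩ - m ⟨i, Nat.lt_of_succ_lt hi⟩) :
    ∀ i : Fin h,
      Eseq e n h m i • r i ∈
        latticeSpan e n (fun j : Fin i.val => r ⟨j.val, j.2.trans i.2⟩) ∧
      ∀ α : ℤ, 1 ≤ α → α < Eseq e n h m i →
        α • r i ∉ latticeSpan e n (fun j : Fin i.val => r ⟨j.val, j.2.trans i.2⟩) := by
  have hchar : ∀ k (hk : k < h),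
      r ⟨k, hk⟩ - m ⟨k, hk⟩ ∈ span ℤ (Set.range (Sum.elim (nbasis e n)
        (fun j : Fin k => m ⟨j.1, Nat.lt_of_lt_of_le j.2 hk.le⟩))) →
      ∀ α : ℤ, (α • r ⟨k, hk⟩ ∈ span ℤ (Set.range (Sum.elim (nbasis e n)
          (fun j : Fin k => m ⟨j.1, Nat.lt_of_lt_of_le j.2 hk.le⟩)))
        ↔ Eseq e n h m ⟨k, hk⟩ ∣ α) := by
    intro k hk hmem α
    exact char_lemma e n hn (fun j : Fin (k + 1) => m ⟨j.1, Nat.lt_of_lt_of_le j.2 hk⟩)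
      (r ⟨k, hk⟩) hmem α
  have hS : ∀ k, ∀ hk : k < h,
      (r ⟨k, hk⟩ - m ⟨k, hk⟩ ∈ span ℤ (Set.range (Sum.elim (nbasis e n)
        (fun j : Fin k => m ⟨j.1, Nat.lt_of_lt_of_le j.2 hk.le⟩)))) ∧
      span ℤ (Set.range (Sum.elim (nbasis e n)
          (fun j : Fin k => r ⟨j.1, Nat.lt_of_lt_of_le j.2 hk.le⟩)))
        = span ℤ (Set.range (Sum.elim (nbasis e n)
          (fun j : Fin k => m ⟨j.1, Nat.lt_of_lt_of_le j.2 hk.le⟩))) := by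
    intro k
    induction k with
    | zero =>
        intro hk
        constructor
        · rw [hr0 hk, sub_self]
          exact zero_mem _
        · have h0 : (fun j : Fin 0 => r ⟨j.1, Nat.lt_of_lt_of_le j.2 hk.le⟩)
              = (fun j : Fin 0 => m ⟨j.1, Nat.lt_of_lt_of_le j.2 hk.le⟩) :=
            funext fun j => j.elim0
          rw [h0]
    | succ k ih =>
        intro hk
        have hk' : k < h := Nat.lt_of_succ_lt hk
        obtain ⟨ih1, ih2⟩ := ih hk'
        have hc := hchar k hk' ih1
        have hE : Eseq e n h m ⟨k, hk'⟩ • r ⟨k, hk'⟩ ∈ span ℤ (Set.range (Sum.elim (nbasis e n)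
            (fun j : Fin k => m ⟨j.1, Nat.lt_of_lt_of_le j.2 hk'.le⟩))) :=
          (hc _).mpr dvd_rfl
        constructor
        · have hrec := hrrec k hk
          have hdiff : r ⟨k + 1, hk⟩ - m ⟨k + 1, hk⟩
              = Eseq e n h m ⟨k, hk'⟩ • r ⟨k, hk'⟩ - m ⟨k, hk'⟩ := by
            rw [hrec]; abel
          rw [hdiff, step_lemma e n m k hk.le]
          refine sub_mem (Submodule.mem_sup_left hE) (Submodule.mem_sup_right (subset_span rfl))
        · rw [step_lemma e n r k hk.le, step_lemma e n m k hk.le]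
          have ih2' : span ℤ (Set.range (Sum.elim (nbasis e n)
              (fun j : Fin k => r ⟨j.1, Nat.lt_of_lt_of_le (Nat.lt_succ_of_lt j.2) hk.le⟩)))
              = span ℤ (Set.range (Sum.elim (nbasis e n)
              (fun j : Fin k => m ⟨j.1, Nat.lt_of_lt_of_le (Nat.lt_succ_of_lt j.2) hk.le⟩))) := ih2
          rw [ih2', ← span_union, ← span_union]
          have ih1' : r ⟨k, hk.le⟩ - m ⟨k, hk.le⟩ ∈ span ℤ (Set.range (Sum.elim (nbasis e n)
              (fun j : Fin k => m ⟨j.1, Nat.lt_of_lt_of_le (Nat.lt_succ_of_lt j.2) hk.le⟩))) := ih1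
          exact span_union_singleton_congr _ _ _ ih1'
  intro i
  obtain ⟨hmem, hspanr⟩ := hS i.1 i.2
  have hc := hchar i.1 i.2 hmem
  constructor
  · show Eseq e n h m ⟨i.1, i.2⟩ • r ⟨i.1, i.2⟩ ∈ latticeSpan e n
      (fun j : Fin i.1 => r ⟨j.1, Nat.lt_of_lt_of_le j.2 i.2.le⟩)
    rw [lattice_eq, hspanr]
    exact (hc _).mpr dvd_rfl
  · intro α h1 h2 hmemα
    have hmemα' : α • r ⟨i.1, i.2⟩ ∈ latticeSpan e n
        (fun j : Fin i.1 => r ⟨j.1, Nat.lt_of_lt_of_le j.2 i.2.le⟩) := hmemα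
    rw [lattice_eq, hspanr] at hmemα'
    have hdv := (hc α).mp hmemα'
    have hle := Int.le_of_dvd (by omega) hdv
    have h2' : α < Eseq e n h m ⟨i.1, i.2⟩ := h2
    omega
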